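/- Convexity of log G: for each x, the function V ↦ log G(0,x) is convex on the set of nonnegative potentials; consequently V ↦ ρ(x) = -(1/2)[log(G(0,x)/G(0,0)) + log(G(0,x)/G(x,x))] is a concave function of V. -/

import Mathlib

open Matrix Finset Real


/-- scalar weighted AM-GM for reciprocals -/
lemma stmt12aux_sc_amgm {v w a b : ℝ} (hv : 0 ≤ v) (hw : 0 ≤ w) (ha : 0 ≤ a) (hb : 0 ≤ b)
    (hab : a + b = 1) :
    (1 + (a * v + b * w))⁻¹ ≤ ((1 + v)⁻¹) ^ a * ((1 + w)⁻¹) ^ b := by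
  have hx : (0:ℝ) < 1 + v := by linarith
  have hy : (0:ℝ) < 1 + w := by linarith
  have h1 : (1 + v) ^ a * (1 + w) ^ b ≤ 1 + (a * v + b * w) := by
    have := Real.geom_mean_le_arith_mean2_weighted ha hb hx.le hy.le hab
    nlinarith [this]
  have hp : (0:ℝ) < (1 + v) ^ a * (1 + w) ^ b :=
    mul_pos (Real.rpow_pos_of_pos hx a) (Real.rpow_pos_of_pos hy b)
  calc (1 + (a * v + b * w))⁻¹ ≤ ((1 + v) ^ a * (1 + w) ^ b)⁻¹ := by
        apply inv_anti₀ hp h1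
    _ = ((1 + v)⁻¹) ^ a * ((1 + w)⁻¹) ^ b := by
        rw [mul_inv, Real.inv_rpow hx.le, Real.inv_rpow hy.le]

/-- finite Hölder -/
lemma stmt12aux_fin_holder {κ : Type*} (s : Finset κ) {a b : ℝ} (ha : 0 < a) (hb : 0 < b)
    (hab : a + b = 1) {f g : κ → ℝ} (hf : ∀ k, 0 ≤ f k) (hg : ∀ k, 0 ≤ g k) :
    ∑ k ∈ s, f k ^ a * g k ^ b ≤ (∑ k ∈ s, f k) ^ a * (∑ k ∈ s, g k) ^ b := by
  have ha1 : a < 1 := by linarith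
  have hpq : Real.HolderConjugate a⁻¹ b⁻¹ := by
    constructor
    · rw [inv_inv, inv_inv, inv_one]; exact hab
    · positivity
    · positivity
  have := Real.inner_le_Lp_mul_Lq s (fun k => f k ^ a) (fun k => g k ^ b) hpq
  simp only [abs_of_nonneg (Real.rpow_nonneg (hf _) _), abs_of_nonneg (Real.rpow_nonneg (hg _) _)]
    at this
  calc ∑ k ∈ s, f k ^ a * g k ^ b
      ≤ (∑ k ∈ s, (f k ^ a) ^ a⁻¹) ^ (1/a⁻¹) * (∑ k ∈ s, (g k ^ b) ^ b⁻¹) ^ (1/b⁻¹) := this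
    _ = (∑ k ∈ s, f k) ^ a * (∑ k ∈ s, g k) ^ b := by
        rw [one_div, inv_inv, one_div, inv_inv]
        congr 1 <;> [skip; skip] <;> congr 1 <;> apply Finset.sum_congr rfl <;> intro k _
        · rw [← Real.rpow_mul (hf k), mul_inv_cancel₀ ha.ne', Real.rpow_one]
        · rw [← Real.rpow_mul (hg k), mul_inv_cancel₀ hb.ne', Real.rpow_one]
lemma stmt12aux_tsum_holder {a b : ℝ} (ha : 0 < a) (hb : 0 < b) (hab : a + b = 1)
    {f g h : ℕ → ℝ} (hf0 : ∀ n, 0 ≤ f n) (hg0 : ∀ n, 0 ≤ g n) (hh0 : ∀ n, 0 ≤ h n)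
    (hle : ∀ n, h n ≤ f n ^ a * g n ^ b) (hf : Summable f) (hg : Summable g) :
    ∑' n, h n ≤ (∑' n, f n) ^ a * (∑' n, g n) ^ b := by
  have hfg : Summable (fun n => a * f n + b * g n) := (hf.mul_left a).add (hg.mul_left b)
  have hh : Summable h := by
    apply Summable.of_nonneg_of_le hh0 (fun n => ?_) hfg
    exact (hle n).trans (Real.geom_mean_le_arith_mean2_weighted ha.le hb.le (hf0 n) (hg0 n) hab)
  apply Summable.tsum_le_of_sum_le hh
  intro s
  have hfin := stmt12aux_fin_holder s ha hb hab hf0 hg0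
  have h1 : ∑ n ∈ s, h n ≤ ∑ n ∈ s, f n ^ a * g n ^ b := Finset.sum_le_sum fun n _ => hle n
  refine h1.trans (hfin.trans ?_)
  have hfs : ∑ n ∈ s, f n ≤ ∑' n, f n := Summable.sum_le_tsum s (fun n _ => hf0 n) hf
  have hgs : ∑ n ∈ s, g n ≤ ∑' n, g n := Summable.sum_le_tsum s (fun n _ => hg0 n) hg
  have h2 : (0:ℝ) ≤ ∑ n ∈ s, f n := Finset.sum_nonneg fun n _ => hf0 n
  have h3 : (0:ℝ) ≤ ∑ n ∈ s, g n := Finset.sum_nonneg fun n _ => hg0 n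
  exact mul_le_mul (Real.rpow_le_rpow h2 hfs ha.le) (Real.rpow_le_rpow h3 hgs hb.le)
    (Real.rpow_nonneg h3 b) (Real.rpow_nonneg (h2.trans hfs) a)

lemma stmt12aux_mul_rpow_comb {a b p1 q1 p2 q2 x y : ℝ} (hp1 : 0 ≤ p1) (hq1 : 0 ≤ q1)
    (hp2 : 0 ≤ p2) (hq2 : 0 ≤ q2) (hx0 : 0 ≤ x) (hy0 : 0 ≤ y)
    (hx : x ≤ p1 ^ a * q1 ^ b) (hy : y ≤ p2 ^ a * q2 ^ b) :
    x * y ≤ (p1 * p2) ^ a * (q1 * q2) ^ b := by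
  calc x * y ≤ (p1 ^ a * q1 ^ b) * (p2 ^ a * q2 ^ b) :=
        mul_le_mul hx hy hy0 (le_trans hx0 hx)
    _ = (p1 * p2) ^ a * (q1 * q2) ^ b := by
        rw [Real.mul_rpow hp1 hp2, Real.mul_rpow hq1 hq2]; ring

section matrices
variable {ι : Type*} [Fintype ι] [DecidableEq ι]

lemma stmt12aux_pow_nonneg {M : Matrix ι ι ℝ} (hM : ∀ i j, 0 ≤ M i j) (n : ℕ) :
    ∀ i j, 0 ≤ (M ^ n) i j := by
  induction n with
  | zero => intro i j; rw [pow_zero]; by_cases h : i = j <;> simp [Matrix.one_apply, h]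
  | succ n ih =>
    intro i j
    rw [pow_succ, Matrix.mul_apply]
    exact Finset.sum_nonneg fun k _ => mul_nonneg (ih i k) (hM k j)

lemma stmt12aux_pow_logcvx {M₁ M₂ M₃ : Matrix ι ι ℝ} {a b : ℝ} (ha : 0 < a) (hb : 0 < b)
    (hab : a + b = 1)
    (h1 : ∀ i j, 0 ≤ M₁ i j) (h2 : ∀ i j, 0 ≤ M₂ i j) (h3 : ∀ i j, 0 ≤ M₃ i j)
    (hle : ∀ i j, M₃ i j ≤ M₁ i j ^ a * M₂ i j ^ b) (n : ℕ) :
    ∀ i j, (M₃ ^ n) i j ≤ (M₁ ^ n) i j ^ a * (M₂ ^ n) i j ^ b := by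
  induction n with
  | zero =>
    intro i j
    rw [pow_zero, pow_zero, pow_zero]
    by_cases h : i = j
    · simp [Matrix.one_apply, h, Real.one_rpow]
    · simp [Matrix.one_apply, h, Real.zero_rpow ha.ne', Real.zero_rpow hb.ne']
  | succ n ih =>
    intro i j
    rw [pow_succ, pow_succ, pow_succ, Matrix.mul_apply, Matrix.mul_apply, Matrix.mul_apply]
    calc ∑ k, (M₃ ^ n) i k * M₃ k j
        ≤ ∑ k, ((M₁ ^ n) i k * M₁ k j) ^ a * ((M₂ ^ n) i k * M₂ k j) ^ b := by
          apply Finset.sum_le_sum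
          intro k _
          exact stmt12aux_mul_rpow_comb (stmt12aux_pow_nonneg h1 n i k) (stmt12aux_pow_nonneg h2 n i k)
            (h1 k j) (h2 k j) (stmt12aux_pow_nonneg h3 n i k) (h3 k j) (ih i k) (hle k j)
      _ ≤ (∑ k, (M₁ ^ n) i k * M₁ k j) ^ a * (∑ k, (M₂ ^ n) i k * M₂ k j) ^ b := by
          apply stmt12aux_fin_holder _ ha hb hab
          · exact fun k => mul_nonneg (stmt12aux_pow_nonneg h1 n i k) (h1 k j)
          · exact fun k => mul_nonneg (stmt12aux_pow_nonneg h2 n i k) (h2 k j)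
end matrices

section neumann
variable {ι : Type*} [Fintype ι] [DecidableEq ι]

/-- If all entrywise power series converge, the tsum matrix is a right inverse of `1 - M`. -/
lemma stmt12aux_neumann {M : Matrix ι ι ℝ}
    (hs : ∀ i j, Summable fun n => (M ^ n) i j) :
    (1 - M) * (Matrix.of fun i j => ∑' n, (M ^ n) i j) = 1 := by
  ext i j
  rw [Matrix.sub_mul, Matrix.one_mul, Matrix.sub_apply]
  have hMT : (M * (Matrix.of fun i j => ∑' n, (M ^ n) i j)) i j
      = ∑' n, (M ^ (n + 1)) i j := by
    rw [Matrix.mul_apply]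
    have h1 : ∀ k, M i k * ∑' n, (M ^ n) k j = ∑' n, M i k * (M ^ n) k j := by
      intro k
      exact ((hs k j).tsum_mul_left (M i k)).symm
    simp only [Matrix.of_apply, h1]
    rw [← Summable.tsum_finsetSum (fun k _ => (hs k j).mul_left (M i k))]
    congr 1
    funext n
    rw [pow_succ', Matrix.mul_apply]
  rw [hMT, Matrix.of_apply]
  have h2 : ∑' n, (M ^ n) i j = (M ^ 0) i j + ∑' n, (M ^ (n + 1)) i j :=
    Summable.tsum_eq_zero_add (hs i j)
  rw [h2, pow_zero]
  ring

/-- pkgA: from summability, identify the inverse entries. -/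
lemma stmt12aux_pkgA {B : Matrix ι ι ℝ} {U : ι → ℝ} (hU : ∀ i, 0 ≤ U i)
    (hs : ∀ i j, Summable fun n =>
      ((Matrix.of fun i j => (1 + U i)⁻¹ * B i j) ^ n) i j) :
    IsUnit (Matrix.diagonal (fun i => 1 + U i) - B).det ∧
      ∀ i j, (Matrix.diagonal (fun i => 1 + U i) - B)⁻¹ i j
        = (∑' n, ((Matrix.of fun i j => (1 + U i)⁻¹ * B i j) ^ n) i j) * (1 + U j)⁻¹ := by
  set M : Matrix ι ι ℝ := Matrix.of fun i j => (1 + U i)⁻¹ * B i j with hM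
  set T : Matrix ι ι ℝ := Matrix.of fun i j => ∑' n, (M ^ n) i j with hT
  have hw : ∀ i, (0:ℝ) < 1 + U i := fun i => by have := hU i; linarith
  have hfact : Matrix.diagonal (fun i => 1 + U i) - B
      = Matrix.diagonal (fun i => 1 + U i) * (1 - M) := by
    ext i j
    rw [Matrix.diagonal_mul, Matrix.sub_apply, Matrix.sub_apply, Matrix.one_apply]
    by_cases h : i = j
    · subst h
      simp [hM, Matrix.diagonal_apply_eq, mul_sub, mul_inv_cancel_left₀ (hw i).ne']
    · rw [Matrix.diagonal_apply_ne _ h, if_neg h]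
      simp [hM]
      rw [← mul_assoc, mul_inv_cancel₀ (hw i).ne', one_mul]
  have hNT : (1 - M) * T = 1 := stmt12aux_neumann hs
  have hright : (Matrix.diagonal (fun i => 1 + U i) - B)
      * (T * Matrix.diagonal (fun i => (1 + U i)⁻¹)) = 1 := by
    rw [hfact, Matrix.mul_assoc, ← Matrix.mul_assoc (1 - M), hNT, Matrix.one_mul,
      Matrix.diagonal_mul_diagonal]
    rw [show (fun i => (1 + U i) * (1 + U i)⁻¹) = fun _ => (1:ℝ) from
      funext fun i => mul_inv_cancel₀ (hw i).ne']
    exact Matrix.diagonal_one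
  refine ⟨Matrix.isUnit_det_of_right_inverse hright, fun i j => ?_⟩
  rw [Matrix.inv_eq_right_inv hright, Matrix.mul_diagonal]
  rfl

/-- pkgB: from invertibility + entrywise-nonneg inverse, get summability of the series. -/
lemma stmt12aux_pkgB {B : Matrix ι ι ℝ} {U : ι → ℝ} (hB : ∀ i j, 0 ≤ B i j)
    (hU : ∀ i, 0 ≤ U i)
    (hdet : IsUnit (Matrix.diagonal (fun i => 1 + U i) - B).det)
    (hpos : ∀ i j, 0 ≤ (Matrix.diagonal (fun i => 1 + U i) - B)⁻¹ i j) :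
    ∀ i j, Summable fun n =>
      ((Matrix.of fun i j => (1 + U i)⁻¹ * B i j) ^ n) i j := by
  set H : Matrix ι ι ℝ := Matrix.diagonal (fun i => 1 + U i) - B with hH
  set M : Matrix ι ι ℝ := Matrix.of fun i j => (1 + U i)⁻¹ * B i j with hM
  have hw : ∀ i, (0:ℝ) < 1 + U i := fun i => by have := hU i; linarith
  have hM0 : ∀ i j, 0 ≤ M i j := fun i j =>
    mul_nonneg (inv_nonneg.2 (hw i).le) (hB i j)
  have hfact : 1 - M = Matrix.diagonal (fun i => (1 + U i)⁻¹) * H := by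
    ext i j
    rw [Matrix.diagonal_mul, Matrix.sub_apply, Matrix.one_apply, hH, Matrix.sub_apply]
    by_cases h : i = j
    · subst h
      simp [hM, Matrix.diagonal_apply_eq, mul_sub, inv_mul_cancel₀ (hw i).ne']
    · rw [Matrix.diagonal_apply_ne _ h, if_neg h]
      simp [hM]
  set R : Matrix ι ι ℝ := H⁻¹ * Matrix.diagonal (fun i => 1 + U i) with hR
  have hNR : (1 - M) * R = 1 := by
    rw [hfact, hR, Matrix.mul_assoc, ← Matrix.mul_assoc H, Matrix.mul_nonsing_inv _ hdet,
      Matrix.one_mul, Matrix.diagonal_mul_diagonal]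
    rw [show (fun i => (1 + U i)⁻¹ * (1 + U i)) = fun _ => (1:ℝ) from
      funext fun i => inv_mul_cancel₀ (hw i).ne']
    exact Matrix.diagonal_one
  have hR0 : ∀ i j, 0 ≤ R i j := by
    intro i j
    rw [hR, Matrix.mul_diagonal]
    exact mul_nonneg (hpos i j) (hw j).le
  intro i j
  apply summable_of_sum_range_le (fun n => stmt12aux_pow_nonneg hM0 n i j)
  intro N
  have hgeom : (∑ n ∈ Finset.range N, M ^ n) * (1 - M) = 1 - M ^ N := by
    have h := geom_sum_mul M N
    rw [mul_sub_one] at h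
    rw [mul_one_sub, ← neg_sub ((∑ n ∈ Finset.range N, M ^ n) * M), h, neg_sub]
  have hSN : (∑ n ∈ Finset.range N, M ^ n) = (1 - M ^ N) * R := by
    have := congrArg (· * R) hgeom
    simpa only [Matrix.mul_assoc, hNR, Matrix.mul_one] using this
  have hval : ∑ n ∈ Finset.range N, (M ^ n) i j = R i j - (M ^ N * R) i j := by
    have := congrFun (congrFun hSN i) j
    rw [Matrix.sum_apply] at this
    rw [this, Matrix.sub_mul, Matrix.one_mul, Matrix.sub_apply]
  rw [hval]
  have : 0 ≤ (M ^ N * R) i j := by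
    rw [Matrix.mul_apply]
    exact Finset.sum_nonneg fun k _ =>
      mul_nonneg (stmt12aux_pow_nonneg hM0 N i k) (hR0 k j)
  linarith

end neumann

section core
variable {ι : Type*} [Fintype ι] [DecidableEq ι]

/-- Core log-convexity estimate: weighted sums of entries of Neumann series. -/
lemma stmt12aux_logconv_core {M₁ M₂ M₃ : Matrix ι ι ℝ} {u₁ u₂ u₃ : ι → ℝ} {a b : ℝ}
    (ha : 0 < a) (hb : 0 < b) (hab : a + b = 1)
    (h1 : ∀ i j, 0 ≤ M₁ i j) (h2 : ∀ i j, 0 ≤ M₂ i j) (h3 : ∀ i j, 0 ≤ M₃ i j)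
    (hu1 : ∀ k, 0 ≤ u₁ k) (hu2 : ∀ k, 0 ≤ u₂ k) (hu3 : ∀ k, 0 ≤ u₃ k)
    (hM : ∀ i j, M₃ i j ≤ M₁ i j ^ a * M₂ i j ^ b)
    (hu : ∀ k, u₃ k ≤ u₁ k ^ a * u₂ k ^ b)
    (hs1 : ∀ i j, Summable fun n => (M₁ ^ n) i j)
    (hs2 : ∀ i j, Summable fun n => (M₂ ^ n) i j)
    (hs3 : ∀ i j, Summable fun n => (M₃ ^ n) i j) (i : ι) :
    ∑ k, (∑' n, (M₃ ^ n) i k) * u₃ k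
      ≤ (∑ k, (∑' n, (M₁ ^ n) i k) * u₁ k) ^ a
        * (∑ k, (∑' n, (M₂ ^ n) i k) * u₂ k) ^ b := by
  have swap : ∀ (M : Matrix ι ι ℝ) (u : ι → ℝ),
      (∀ i j, Summable fun n => (M ^ n) i j) →
      ∑ k, (∑' n, (M ^ n) i k) * u k = ∑' n, ∑ k, (M ^ n) i k * u k := by
    intro M u hs
    have h1k : ∀ k, (∑' n, (M ^ n) i k) * u k = ∑' n, (M ^ n) i k * u k :=
      fun k => ((hs i k).tsum_mul_right (u k)).symm
    simp only [h1k]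
    exact (Summable.tsum_finsetSum (fun k _ => (hs i k).mul_right (u k))).symm
  rw [swap M₁ u₁ hs1, swap M₂ u₂ hs2, swap M₃ u₃ hs3]
  apply stmt12aux_tsum_holder ha hb hab
  · exact fun n => Finset.sum_nonneg fun k _ =>
      mul_nonneg (stmt12aux_pow_nonneg h1 n i k) (hu1 k)
  · exact fun n => Finset.sum_nonneg fun k _ =>
      mul_nonneg (stmt12aux_pow_nonneg h2 n i k) (hu2 k)
  · exact fun n => Finset.sum_nonneg fun k _ =>
      mul_nonneg (stmt12aux_pow_nonneg h3 n i k) (hu3 k)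
  · intro n
    calc ∑ k, (M₃ ^ n) i k * u₃ k
        ≤ ∑ k, ((M₁ ^ n) i k * u₁ k) ^ a * ((M₂ ^ n) i k * u₂ k) ^ b := by
          apply Finset.sum_le_sum
          intro k _
          exact stmt12aux_mul_rpow_comb (stmt12aux_pow_nonneg h1 n i k) (stmt12aux_pow_nonneg h2 n i k)
            (hu1 k) (hu2 k) (stmt12aux_pow_nonneg h3 n i k) (hu3 k)
            (stmt12aux_pow_logcvx ha hb hab h1 h2 h3 hM n i k) (hu k)
      _ ≤ (∑ k, (M₁ ^ n) i k * u₁ k) ^ a * (∑ k, (M₂ ^ n) i k * u₂ k) ^ b :=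
          stmt12aux_fin_holder _ ha hb hab
            (fun k => mul_nonneg (stmt12aux_pow_nonneg h1 n i k) (hu1 k))
            (fun k => mul_nonneg (stmt12aux_pow_nonneg h2 n i k) (hu2 k))
  · exact summable_sum fun k _ => (hs1 i k).mul_right (u₁ k)
  · exact summable_sum fun k _ => (hs2 i k).mul_right (u₂ k)

/-- submatrix powers are dominated by powers at embedded indices -/
lemma stmt12aux_sub_pow_le {p : ι → Prop} [DecidablePred p] {M : Matrix ι ι ℝ}
    (hM : ∀ i j, 0 ≤ M i j) (n : ℕ) :
    ∀ i j : Subtype p, ((M.submatrix (Subtype.val) (Subtype.val)) ^ n) i j ≤ (M ^ n) i j := by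
  induction n with
  | zero =>
    intro i j
    rw [pow_zero, pow_zero]
    by_cases h : i = j
    · subst h; simp [Matrix.one_apply]
    · rw [Matrix.one_apply_ne h, Matrix.one_apply_ne (fun hc => h (Subtype.ext hc))]
  | succ n ih =>
    intro i j
    rw [pow_succ, pow_succ, Matrix.mul_apply, Matrix.mul_apply]
    have hsub : ∀ i j : Subtype p, 0 ≤ (M.submatrix (Subtype.val) (Subtype.val)) i j :=
      fun i j => hM i j
    calc ∑ k : Subtype p, ((M.submatrix Subtype.val Subtype.val) ^ n) i k
          * (M.submatrix Subtype.val Subtype.val) k j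
        ≤ ∑ k : Subtype p, (M ^ n) (i:ι) (k:ι) * M (k:ι) (j:ι) := by
          apply Finset.sum_le_sum
          intro k _
          exact mul_le_mul (ih i k) le_rfl (hsub k j) (stmt12aux_pow_nonneg hM n i k)
      _ = ∑ k ∈ Finset.univ.filter p, (M ^ n) (i:ι) k * M k (j:ι) :=
          (Finset.sum_subtype (Finset.univ.filter p)
            (fun x => by simp) (fun k => (M ^ n) (i:ι) k * M k (j:ι))).symm
      _ ≤ ∑ k, (M ^ n) (i:ι) k * M k (j:ι) := by
          apply Finset.sum_le_sum_of_subset_of_nonneg (Finset.filter_subset _ _)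
          exact fun k _ _ => mul_nonneg (stmt12aux_pow_nonneg hM n i k) (hM k j)

end core

lemma stmt12aux_wamgm {v w β a b : ℝ} (hv : 0 ≤ v) (hw : 0 ≤ w) (hβ : 0 ≤ β)
    (ha : 0 < a) (hb : 0 < b) (hab : a + b = 1) :
    (1 + (a * v + b * w))⁻¹ * β ≤ ((1 + v)⁻¹ * β) ^ a * ((1 + w)⁻¹ * β) ^ b := by
  have hx : (0:ℝ) < 1 + v := by linarith
  have hy : (0:ℝ) < 1 + w := by linarith
  calc (1 + (a * v + b * w))⁻¹ * β ≤ (((1 + v)⁻¹) ^ a * ((1 + w)⁻¹) ^ b) * β :=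
        mul_le_mul_of_nonneg_right (stmt12aux_sc_amgm hv hw ha.le hb.le hab) hβ
    _ = ((1 + v)⁻¹ * β) ^ a * ((1 + w)⁻¹ * β) ^ b := by
        rw [Real.mul_rpow (inv_nonneg.2 hx.le) hβ, Real.mul_rpow (inv_nonneg.2 hy.le) hβ]
        have hββ : β ^ a * β ^ b = β := by
          rw [← Real.rpow_add' hβ (by rw [hab]; norm_num), hab, Real.rpow_one]
        calc ((1 + v)⁻¹) ^ a * ((1 + w)⁻¹) ^ b * β
            = ((1 + v)⁻¹) ^ a * ((1 + w)⁻¹) ^ b * (β ^ a * β ^ b) := by rw [hββ]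
          _ = (1 + v)⁻¹ ^ a * β ^ a * ((1 + w)⁻¹ ^ b * β ^ b) := by ring

section ratio
variable {ι : Type*} [Fintype ι] [DecidableEq ι]

lemma stmt12aux_ratio_eq {B : Matrix ι ι ℝ} {U : ι → ℝ}
    (hdet : IsUnit (Matrix.diagonal (fun i => 1 + U i) - B).det) {z y : ι} (hyz : y ≠ z)
    (hKdet : IsUnit (((Matrix.diagonal (fun i => 1 + U i) - B).submatrix
      (Subtype.val : {i : ι // i ≠ z} → ι) Subtype.val)).det)
    (hGzz : (Matrix.diagonal (fun i => 1 + U i) - B)⁻¹ z z ≠ 0) :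
    (Matrix.diagonal (fun i => 1 + U i) - B)⁻¹ y z
      / (Matrix.diagonal (fun i => 1 + U i) - B)⁻¹ z z
    = ∑ k : {i : ι // i ≠ z},
        ((Matrix.diagonal (fun i => 1 + U i) - B).submatrix
          (Subtype.val : {i : ι // i ≠ z} → ι) Subtype.val)⁻¹ ⟨y, hyz⟩ k * B k z := by
  set H : Matrix ι ι ℝ := Matrix.diagonal (fun i => 1 + U i) - B with hH
  set G : Matrix ι ι ℝ := H⁻¹ with hG
  set K := H.submatrix (Subtype.val : {i : ι // i ≠ z} → ι) Subtype.val with hK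
  have hHG : H * G = 1 := Matrix.mul_nonsing_inv _ hdet
  have hrow : ∀ i : {i : ι // i ≠ z}, ∑ jj, H ↑i jj * G jj z = 0 := by
    intro i
    have h0 := congrFun (congrFun hHG ↑i) z
    rw [Matrix.mul_apply] at h0
    rw [h0, Matrix.one_apply_ne i.2]
  have hsplit : ∀ i : {i : ι // i ≠ z},
      ∑ k : {i : ι // i ≠ z}, K i k * G ↑k z = B ↑i z * G z z := by
    intro i
    have h1 : ∑ jj ∈ Finset.univ.erase z, H ↑i jj * G jj z + H ↑i z * G z z
        = ∑ jj, H ↑i jj * G jj z := Finset.sum_erase_add _ _ (Finset.mem_univ z)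
    have h2 : ∑ jj ∈ Finset.univ.erase z, H ↑i jj * G jj z
        = ∑ k : {i : ι // i ≠ z}, K i k * G ↑k z :=
      Finset.sum_subtype (Finset.univ.erase z) (fun x => by simp)
        (fun jj => H ↑i jj * G jj z)
    have hHiz : H ↑i z = -B ↑i z := by
      rw [hH, Matrix.sub_apply, Matrix.diagonal_apply_ne _ i.2, zero_sub]
    rw [hrow i, hHiz] at h1
    rw [← h2]
    linarith [h1]
  have hvec : K *ᵥ (fun k : {i : ι // i ≠ z} => G ↑k z)
      = fun i : {i : ι // i ≠ z} => B ↑i z * G z z := by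
    funext i
    show ∑ k, K i k * G ↑k z = _
    exact hsplit i
  have hsolve : (fun k : {i : ι // i ≠ z} => G ↑k z)
      = K⁻¹ *ᵥ (fun i : {i : ι // i ≠ z} => B ↑i z * G z z) := by
    rw [← hvec, Matrix.mulVec_mulVec, Matrix.nonsing_inv_mul _ hKdet, Matrix.one_mulVec]
  have hGyz : G y z = (∑ k : {i : ι // i ≠ z}, K⁻¹ ⟨y, hyz⟩ k * B ↑k z) * G z z := by
    have := congrFun hsolve ⟨y, hyz⟩
    simp only [Matrix.mulVec, dotProduct] at this
    rw [this, Finset.sum_mul]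
    congr 1; funext k; ring
  rw [hGyz]
  field_simp
end ratio

section mid
variable {ι : Type*} [Fintype ι] [DecidableEq ι]

lemma stmt12aux_mid {B : Matrix ι ι ℝ} (hB : ∀ i j, 0 ≤ B i j) {γ : ι → ℝ}
    (hγ : ∀ k, 0 ≤ γ k) {V W : ι → ℝ} (hV : ∀ i, 0 ≤ V i) (hW : ∀ i, 0 ≤ W i)
    {a b : ℝ} (ha : 0 < a) (hb : 0 < b) (hab : a + b = 1)
    (hsV : ∀ i j, Summable fun n => ((Matrix.of fun i j => (1 + V i)⁻¹ * B i j) ^ n) i j)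
    (hsW : ∀ i j, Summable fun n => ((Matrix.of fun i j => (1 + W i)⁻¹ * B i j) ^ n) i j)
    (hsC : ∀ i j, Summable fun n =>
      ((Matrix.of fun i j => (1 + (a * V i + b * W i))⁻¹ * B i j) ^ n) i j) (i : ι) :
    ∑ k, (∑' n, ((Matrix.of fun i j => (1 + (a * V i + b * W i))⁻¹ * B i j) ^ n) i k)
        * ((1 + (a * V k + b * W k))⁻¹ * γ k)
    ≤ (∑ k, (∑' n, ((Matrix.of fun i j => (1 + V i)⁻¹ * B i j) ^ n) i k)
        * ((1 + V k)⁻¹ * γ k)) ^ a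
      * (∑ k, (∑' n, ((Matrix.of fun i j => (1 + W i)⁻¹ * B i j) ^ n) i k)
        * ((1 + W k)⁻¹ * γ k)) ^ b := by
  have hwV : ∀ i, (0:ℝ) < 1 + V i := fun i => by have := hV i; linarith
  have hwW : ∀ i, (0:ℝ) < 1 + W i := fun i => by have := hW i; linarith
  have hwC : ∀ i, (0:ℝ) < 1 + (a * V i + b * W i) := fun i => by
    have := hV i; have := hW i
    have := mul_nonneg ha.le (hV i); have := mul_nonneg hb.le (hW i); linarith
  apply stmt12aux_logconv_core ha hb hab
  · exact fun i j => mul_nonneg (inv_nonneg.2 (hwV i).le) (hB i j)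
  · exact fun i j => mul_nonneg (inv_nonneg.2 (hwW i).le) (hB i j)
  · exact fun i j => mul_nonneg (inv_nonneg.2 (hwC i).le) (hB i j)
  · exact fun k => mul_nonneg (inv_nonneg.2 (hwV k).le) (hγ k)
  · exact fun k => mul_nonneg (inv_nonneg.2 (hwW k).le) (hγ k)
  · exact fun k => mul_nonneg (inv_nonneg.2 (hwC k).le) (hγ k)
  · exact fun i j => stmt12aux_wamgm (hV i) (hW i) (hB i j) ha hb hab
  · exact fun k => stmt12aux_wamgm (hV k) (hW k) (hγ k) ha hb hab
  · exact hsV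
  · exact hsW
  · exact hsC
end mid




/-- For each `x`, the map `V ↦ log G(0,x)` (with `G = (Hm V)⁻¹`,
`Hm V = 1 + diag V - (2d)⁻¹ A`) is convex on the set of nonnegative potentials;
consequently `V ↦ ρ(x) = -(1/2)[log (G(0,x)/G(0,0)) + log (G(0,x)/G(x,x))]`
is concave there. -/
theorem stmt12 (d : ℕ) (hd : 0 < d) (ι : Type*) [Fintype ι] [DecidableEq ι]
    (A : Matrix ι ι ℝ) (hA01 : ∀ i j, A i j = 0 ∨ A i j = 1) (hAsym : A.IsSymm)
    (hAdiag : ∀ i, A i i = 0) (hArow : ∀ i, ∑ j, A i j ≤ 2 * d)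
    (Hm : (ι → ℝ) → Matrix ι ι ℝ)
    (hHm : ∀ W : ι → ℝ, Hm W = 1 + Matrix.diagonal W - ((2 * d : ℝ))⁻¹ • A)
    (hpd : ∀ W : ι → ℝ, (∀ i, 0 ≤ W i) → (Hm W).PosDef)
    (hpos : ∀ W : ι → ℝ, (∀ i, 0 ≤ W i) → ∀ i j, 0 < (Hm W)⁻¹ i j)
    (x₀ x : ι) :
    ConvexOn ℝ {V : ι → ℝ | ∀ i, 0 ≤ V i}
        (fun V => Real.log ((Hm V)⁻¹ x₀ x)) ∧
      ConcaveOn ℝ {V : ι → ℝ | ∀ i, 0 ≤ V i}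
        (fun V => -(1 / 2) *
          (Real.log ((Hm V)⁻¹ x₀ x / (Hm V)⁻¹ x₀ x₀)
            + Real.log ((Hm V)⁻¹ x₀ x / (Hm V)⁻¹ x x))) := by

  set B : Matrix ι ι ℝ := ((2 * d : ℝ))⁻¹ • A with hBdef
  have hB : ∀ i j, 0 ≤ B i j := by
    intro i j
    have h2d : (0:ℝ) ≤ ((2 * (d:ℝ)))⁻¹ := by positivity
    rcases hA01 i j with h | h <;>
      simp [hBdef, Matrix.smul_apply, h, smul_eq_mul] <;> positivity
  have hHB : ∀ U : ι → ℝ, Hm U = Matrix.diagonal (fun i => 1 + U i) - B := by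
    intro U
    rw [hHm U]
    congr 1
    ext i j
    by_cases h : i = j
    · subst h; simp [Matrix.one_apply, Matrix.diagonal_apply]
    · simp [Matrix.one_apply_ne h, Matrix.diagonal_apply_ne _ h]
  have hdet : ∀ U : ι → ℝ, (∀ i, 0 ≤ U i) →
      IsUnit (Matrix.diagonal (fun i => 1 + U i) - B).det := by
    intro U hU
    have h1 := (hpd U hU).det_pos
    rw [hHB U] at h1
    exact isUnit_iff_ne_zero.2 (ne_of_gt h1)
  have hposH : ∀ U : ι → ℝ, (∀ i, 0 ≤ U i) → ∀ i j,
      0 < (Matrix.diagonal (fun i => 1 + U i) - B)⁻¹ i j := by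
    intro U hU i j
    have := hpos U hU i j
    rwa [hHB U] at this
  have hsum : ∀ U : ι → ℝ, (∀ i, 0 ≤ U i) → ∀ i j, Summable fun n =>
      ((Matrix.of fun i j => (1 + U i)⁻¹ * B i j) ^ n) i j :=
    fun U hU => stmt12aux_pkgB hB hU (hdet U hU) (fun i j => (hposH U hU i j).le)
  have hentry : ∀ U : ι → ℝ, (∀ i, 0 ≤ U i) → ∀ i j, (Hm U)⁻¹ i j
      = (∑' n, ((Matrix.of fun i j => (1 + U i)⁻¹ * B i j) ^ n) i j) * (1 + U j)⁻¹ := by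
    intro U hU i j
    rw [hHB U]
    exact (stmt12aux_pkgA hU (hsum U hU)).2 i j
  have hconv : Convex ℝ {V : ι → ℝ | ∀ i, 0 ≤ V i} := by
    intro V hV W hW a b ha hb hab
    exact fun i => add_nonneg (mul_nonneg ha (hV i)) (mul_nonneg hb (hW i))
  -- Part 1, for arbitrary entries (i,j)
  have part1gen : ∀ i j : ι, ConvexOn ℝ {V : ι → ℝ | ∀ k, 0 ≤ V k}
      (fun V => Real.log ((Hm V)⁻¹ i j)) := by
    intro i j
    refine ⟨hconv, ?_⟩
    intro V hV W hW a b ha hb hab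
    rcases eq_or_lt_of_le ha with ha0 | ha'
    · have hb1 : b = 1 := by linarith
      subst hb1
      rw [← ha0]
      simp
    rcases eq_or_lt_of_le hb with hb0 | hb'
    · have ha1 : a = 1 := by linarith
      subst ha1
      rw [← hb0]
      simp
    have hVc : ∀ k, 0 ≤ V k := hV
    have hWc : ∀ k, 0 ≤ W k := hW
    have hC : ∀ k, (0:ℝ) ≤ a * V k + b * W k :=
      fun k => add_nonneg (mul_nonneg ha (hVc k)) (mul_nonneg hb (hWc k))
    rw [show a • V + b • W = (fun k => a * V k + b * W k) from rfl]
    have hcol : ∀ (U : ι → ℝ), (∀ k, 0 ≤ U k) →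
        ∑ k, (∑' n, ((Matrix.of fun i j => (1 + U i)⁻¹ * B i j) ^ n) i k)
          * ((1 + U k)⁻¹ * (if k = j then (1:ℝ) else 0)) = (Hm U)⁻¹ i j := by
      intro U hU
      rw [hentry U hU i j]
      rw [Finset.sum_eq_single j]
      · simp
      · intro k _ hk; simp [hk]
      · intro hj; exact absurd (Finset.mem_univ j) hj
    have hmid := stmt12aux_mid hB (γ := fun k => if k = j then (1:ℝ) else 0)
      (fun k => by by_cases h : k = j <;> simp [h]) hVc hWc ha' hb' hab
      (hsum V hVc) (hsum W hWc) (hsum _ hC) i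
    rw [hcol V hVc, hcol W hWc, hcol (fun k => a * V k + b * W k) hC] at hmid
    have hpV := hpos V hVc i j
    have hpW := hpos W hWc i j
    have hpC := hpos _ hC i j
    calc Real.log ((Hm fun k => a * V k + b * W k)⁻¹ i j)
        ≤ Real.log (((Hm V)⁻¹ i j) ^ a * ((Hm W)⁻¹ i j) ^ b) := Real.log_le_log hpC hmid
      _ = a * Real.log ((Hm V)⁻¹ i j) + b * Real.log ((Hm W)⁻¹ i j) := by
          rw [Real.log_mul (Real.rpow_pos_of_pos hpV a).ne' (Real.rpow_pos_of_pos hpW b).ne',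
            Real.log_rpow hpV, Real.log_rpow hpW]
      _ = a • Real.log ((Hm V)⁻¹ i j) + b • Real.log ((Hm W)⁻¹ i j) := by
          simp [smul_eq_mul]
  -- symmetry of the Green's function
  have hGsym : ∀ U : ι → ℝ, ∀ i j, (Hm U)⁻¹ i j = (Hm U)⁻¹ j i := by
    intro U i j
    have hsymH : (Hm U)ᵀ = Hm U := by
      rw [hHm U, Matrix.transpose_sub, Matrix.transpose_add, Matrix.transpose_one,
        Matrix.diagonal_transpose, Matrix.transpose_smul, hAsym]
    calc (Hm U)⁻¹ i j = ((Hm U)⁻¹)ᵀ j i := rfl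
      _ = ((Hm U)ᵀ)⁻¹ j i := by rw [Matrix.transpose_nonsing_inv]
      _ = (Hm U)⁻¹ j i := by rw [hsymH]
  -- summability on subtypes
  have hsub : ∀ (U : ι → ℝ), (∀ k, 0 ≤ U k) → ∀ z : ι, ∀ i j : {k : ι // k ≠ z},
      Summable fun n => ((Matrix.of fun i j : {k : ι // k ≠ z} =>
        (1 + U ↑i)⁻¹ * (B.submatrix Subtype.val Subtype.val) i j) ^ n) i j := by
    intro U hU z i j
    have hM0 : ∀ i j, 0 ≤ (Matrix.of fun i j => (1 + U i)⁻¹ * B i j) i j := by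
      intro i j
      have h1 : (0:ℝ) < 1 + U i := by have := hU i; linarith
      exact mul_nonneg (inv_nonneg.2 h1.le) (hB i j)
    have heq : (Matrix.of fun i j : {k : ι // k ≠ z} =>
        (1 + U ↑i)⁻¹ * (B.submatrix Subtype.val Subtype.val) i j)
        = (Matrix.of fun i j => (1 + U i)⁻¹ * B i j).submatrix Subtype.val Subtype.val := rfl
    rw [heq]
    exact Summable.of_nonneg_of_le
      (fun n => stmt12aux_pow_nonneg
        (M := (Matrix.of fun i j => (1 + U i)⁻¹ * B i j).submatrix Subtype.val Subtype.val)
        (fun i j => by rw [Matrix.submatrix_apply]; exact hM0 ↑i ↑j) n i j)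
      (fun n => stmt12aux_sub_pow_le hM0 n i j)
      (hsum U hU ↑i ↑j)
  -- ratio formula
  have hratio : ∀ (U : ι → ℝ) (hU : ∀ k, 0 ≤ U k) (z y : ι) (hyz : y ≠ z),
      (Hm U)⁻¹ y z / (Hm U)⁻¹ z z
      = ∑ k : {k : ι // k ≠ z},
          (∑' n, ((Matrix.of fun i j : {k : ι // k ≠ z} =>
            (1 + U ↑i)⁻¹ * (B.submatrix Subtype.val Subtype.val) i j) ^ n) ⟨y, hyz⟩ k)
          * ((1 + U ↑k)⁻¹ * B ↑k z) := by
    intro U hU z y hyz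
    have hpkg := stmt12aux_pkgA (ι := {k : ι // k ≠ z})
      (B := B.submatrix Subtype.val Subtype.val)
      (U := fun k => U ↑k) (fun k => hU ↑k) (hsub U hU z)
    have hKeq : (Matrix.diagonal (fun i : {k : ι // k ≠ z} => 1 + U ↑i)
        - B.submatrix Subtype.val Subtype.val)
        = (Matrix.diagonal (fun i => 1 + U i) - B).submatrix Subtype.val Subtype.val := by
      ext i j
      by_cases h : i = j
      · subst h; simp [Matrix.diagonal_apply_eq, Matrix.submatrix_apply]
      · simp [Matrix.submatrix_apply, Matrix.sub_apply, Matrix.diagonal_apply_ne _ h,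
          Matrix.diagonal_apply_ne _ (fun hc => h (Subtype.ext hc))]
    have hKdet : IsUnit ((Matrix.diagonal (fun i => 1 + U i) - B).submatrix
        (Subtype.val : {k : ι // k ≠ z} → ι) Subtype.val).det := by
      rw [← hKeq]; exact hpkg.1
    have hGzz : (Matrix.diagonal (fun i => 1 + U i) - B)⁻¹ z z ≠ 0 := (hposH U hU z z).ne'
    have hre := stmt12aux_ratio_eq (hdet U hU) hyz hKdet hGzz
    rw [hHB U, hre]
    apply Finset.sum_congr rfl
    intro k _
    rw [← hKeq, hpkg.2 ⟨y, hyz⟩ k]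
    ring
  -- log-convexity of ratios
  have hlogratio : ∀ (V : ι → ℝ), (∀ k, 0 ≤ V k) → ∀ (W : ι → ℝ), (∀ k, 0 ≤ W k) →
      ∀ a b : ℝ, 0 < a → 0 < b → a + b = 1 → ∀ z y : ι, y ≠ z →
      Real.log ((Hm fun k => a * V k + b * W k)⁻¹ y z
          / (Hm fun k => a * V k + b * W k)⁻¹ z z)
      ≤ a * Real.log ((Hm V)⁻¹ y z / (Hm V)⁻¹ z z)
        + b * Real.log ((Hm W)⁻¹ y z / (Hm W)⁻¹ z z) := by
    intro V hV W hW a b ha hb hab z y hyz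
    have hC : ∀ k, (0:ℝ) ≤ a * V k + b * W k :=
      fun k => add_nonneg (mul_nonneg ha.le (hV k)) (mul_nonneg hb.le (hW k))
    have hmid := stmt12aux_mid (ι := {k : ι // k ≠ z})
      (B := B.submatrix Subtype.val Subtype.val)
      (fun i j => hB ↑i ↑j) (γ := fun k => B ↑k z) (fun k => hB ↑k z)
      (V := fun k => V ↑k) (W := fun k => W ↑k) (fun k => hV ↑k) (fun k => hW ↑k)
      ha hb hab (hsub V hV z) (hsub W hW z)
      (hsub (fun k => a * V k + b * W k) hC z) ⟨y, hyz⟩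
    rw [← hratio V hV z y hyz, ← hratio W hW z y hyz,
      ← hratio (fun k => a * V k + b * W k) hC z y hyz] at hmid
    have hrV : 0 < (Hm V)⁻¹ y z / (Hm V)⁻¹ z z :=
      div_pos (hpos V hV y z) (hpos V hV z z)
    have hrW : 0 < (Hm W)⁻¹ y z / (Hm W)⁻¹ z z :=
      div_pos (hpos W hW y z) (hpos W hW z z)
    have hrC : 0 < (Hm fun k => a * V k + b * W k)⁻¹ y z
        / (Hm fun k => a * V k + b * W k)⁻¹ z z :=
      div_pos (hpos _ hC y z) (hpos _ hC z z)
    calc Real.log ((Hm fun k => a * V k + b * W k)⁻¹ y z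
            / (Hm fun k => a * V k + b * W k)⁻¹ z z)
        ≤ Real.log (((Hm V)⁻¹ y z / (Hm V)⁻¹ z z) ^ a
            * ((Hm W)⁻¹ y z / (Hm W)⁻¹ z z) ^ b) := Real.log_le_log hrC hmid
      _ = a * Real.log ((Hm V)⁻¹ y z / (Hm V)⁻¹ z z)
          + b * Real.log ((Hm W)⁻¹ y z / (Hm W)⁻¹ z z) := by
          rw [Real.log_mul (Real.rpow_pos_of_pos hrV a).ne' (Real.rpow_pos_of_pos hrW b).ne',
            Real.log_rpow hrV, Real.log_rpow hrW]
  refine ⟨part1gen x₀ x, hconv, ?_⟩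
  intro V hV W hW a b ha hb hab
  rcases eq_or_lt_of_le ha with ha0 | ha'
  · have hb1 : b = 1 := by linarith
    subst hb1
    rw [← ha0]
    simp
  rcases eq_or_lt_of_le hb with hb0 | hb'
  · have ha1 : a = 1 := by linarith
    subst ha1
    rw [← hb0]
    simp
  have hVc : ∀ k, 0 ≤ V k := hV
  have hWc : ∀ k, 0 ≤ W k := hW
  have hC : ∀ k, (0:ℝ) ≤ a * V k + b * W k :=
    fun k => add_nonneg (mul_nonneg ha (hVc k)) (mul_nonneg hb (hWc k))
  rw [show a • V + b • W = (fun k => a * V k + b * W k) from rfl]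
  have hq2 : Real.log ((Hm fun k => a * V k + b * W k)⁻¹ x₀ x
        / (Hm fun k => a * V k + b * W k)⁻¹ x x)
      ≤ a * Real.log ((Hm V)⁻¹ x₀ x / (Hm V)⁻¹ x x)
        + b * Real.log ((Hm W)⁻¹ x₀ x / (Hm W)⁻¹ x x) := by
    by_cases hxx : x₀ = x
    · subst hxx
      have h0 : ∀ U : ι → ℝ, (∀ k, 0 ≤ U k) →
          Real.log ((Hm U)⁻¹ x₀ x₀ / (Hm U)⁻¹ x₀ x₀) = 0 :=
        fun U hU => by rw [div_self (hpos U hU x₀ x₀).ne', Real.log_one]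
      rw [h0 _ hC, h0 V hVc, h0 W hWc]
      simp
    · exact hlogratio V hVc W hWc a b ha' hb' hab x x₀ hxx
  have hq1 : Real.log ((Hm fun k => a * V k + b * W k)⁻¹ x₀ x
        / (Hm fun k => a * V k + b * W k)⁻¹ x₀ x₀)
      ≤ a * Real.log ((Hm V)⁻¹ x₀ x / (Hm V)⁻¹ x₀ x₀)
        + b * Real.log ((Hm W)⁻¹ x₀ x / (Hm W)⁻¹ x₀ x₀) := by
    by_cases hxx : x₀ = x
    · subst hxx
      have h0 : ∀ U : ι → ℝ, (∀ k, 0 ≤ U k) →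
          Real.log ((Hm U)⁻¹ x₀ x₀ / (Hm U)⁻¹ x₀ x₀) = 0 :=
        fun U hU => by rw [div_self (hpos U hU x₀ x₀).ne', Real.log_one]
      rw [h0 _ hC, h0 V hVc, h0 W hWc]
      simp
    · have hsw : ∀ U : ι → ℝ, (Hm U)⁻¹ x₀ x = (Hm U)⁻¹ x x₀ := fun U => hGsym U x₀ x
      rw [hsw, hsw, hsw]
      exact hlogratio V hVc W hWc a b ha' hb' hab x₀ x (fun hc => hxx hc.symm)
  simp only [smul_eq_mul]
  linarith [hq1, hq2]
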